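/- In an SP-structure, if A is a subspace then A ⊕ A^⊥ = Ω and A ∩ A^⊥ = ∅, where A ⊕ B denotes the smallest subspace containing A ∪ B. -/

import Mathlib

variable {Ω : Type*}

/-- A set of pairwise orthogonal points. -/
def OrthoSet (s : Ω → Ω → ℝ) (A : Set Ω) : Prop :=
  ∀ x ∈ A, ∀ y ∈ A, x ≠ y → s x y = 0

/-- The subspace generated by an ortho-set `A`: the points whose total
similarity to `A` equals `1`. -/
def SpanOf (s : Ω → Ω → ℝ) (A : Set Ω) : Set Ω :=
  {x : Ω | (∑' y : A, s x (y : Ω)) = 1}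

/-- A subspace is a set of the form `SpanOf s A` for an ortho-set `A` (a basis). -/
def IsSubspace (s : Ω → Ω → ℝ) (B : Set Ω) : Prop :=
  ∃ A : Set Ω, OrthoSet s A ∧ B = SpanOf s A

/-- Orthogonal complement of a subset. -/
def Perp (s : Ω → Ω → ℝ) (A : Set Ω) : Set Ω :=
  {x : Ω | ∀ y ∈ A, s x y = 0}

/-- The sum of two subsets: the smallest subspace including their union. -/
def Oplus (s : Ω → Ω → ℝ) (A B : Set Ω) : Set Ω :=
  ⋂₀ {X : Set Ω | IsSubspace s X ∧ A ∪ B ⊆ X}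

/-- Key lemma: if `y` lies in the span of `B` and `insert x B` is an ortho-set
with `x ∉ B`, then `s y x = 0`. -/
lemma span_orth_aux (s : Ω → Ω → ℝ)
    (hval : ∀ x y : Ω, s x y ∈ Set.Icc (0 : ℝ) 1)
    (hbound : ∀ (x : Ω) (A : Set Ω), OrthoSet s A → (∑' y : A, s x (y : Ω)) ≤ 1)
    {B : Set Ω} {x y : Ω} (hB : OrthoSet s (insert x B)) (hx : x ∉ B)
    (hy : y ∈ SpanOf s B) : s y x = 0 := by
  have h1 : (∑' z : B, s y (z : Ω)) = 1 := hy
  have hsumB : Summable (fun z : B => s y (z : Ω)) := by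
    by_contra h
    rw [tsum_eq_zero_of_not_summable h] at h1
    norm_num at h1
  have hd : Disjoint ({x} : Set Ω) B := Set.disjoint_singleton_left.mpr hx
  have hins : ({x} : Set Ω) ∪ B = insert x B := Set.singleton_union
  have hsx : Summable ((fun z => s y z) ∘ (↑) : ({x} : Set Ω) → ℝ) := by
    apply Summable.of_finite
  have htot : (∑' z : (insert x B : Set Ω), s y (z : Ω)) = s y x + 1 := by
    rw [← hins, Summable.tsum_union_disjoint (f := fun z => s y z) hd hsx hsumB, h1]
    congr 1
    simp
  have hb := hbound y (insert x B) hB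
  rw [htot] at hb
  have h0 := (hval y x).1
  linarith [le_antisymm (by linarith) h0]

theorem oplus_perp_eq_univ_and_inter_perp_eq_empty
    (s : Ω → Ω → ℝ)
    (hval : ∀ x y : Ω, s x y ∈ Set.Icc (0 : ℝ) 1)
    (heq : ∀ x y : Ω, s x y = 1 ↔ x = y)
    (hsym : ∀ x y : Ω, s x y = s y x)
    (hbound : ∀ (x : Ω) (A : Set Ω), OrthoSet s A → (∑' y : A, s x (y : Ω)) ≤ 1)
    (hinter : ∀ 𝒜 : Set (Set Ω), (∀ X ∈ 𝒜, IsSubspace s X) → IsSubspace s (⋂₀ 𝒜))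
    (huniv : IsSubspace s (Set.univ : Set Ω))
    (hempty : IsSubspace s (∅ : Set Ω))
    (hext : ∀ B : Set Ω, OrthoSet s B →
      ∃ B' : Set Ω, B ⊆ B' ∧ OrthoSet s B' ∧ SpanOf s B' = Set.univ) :
    ∀ A : Set Ω, IsSubspace s A →
      Oplus s A (Perp s A) = Set.univ ∧ A ∩ Perp s A = ∅ := by
  intro A hA
  obtain ⟨B, hB, rfl⟩ := hA
  -- a basis is contained in its span
  have hBspan : B ⊆ SpanOf s B := by
    intro b hb
    have h : (∑' z : B, s b (z : Ω)) = s b b := by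
      apply tsum_eq_single (⟨b, hb⟩ : B)
      rintro ⟨z, hz⟩ hne
      exact hB b hb z hz (by simpa [eq_comm, Subtype.ext_iff] using hne)
    show (∑' z : B, s b (z : Ω)) = 1
    rw [h]
    exact (heq b b).2 rfl
  constructor
  · -- extend B to a basis B' of Ω
    obtain ⟨B', hBB', hB', hB'univ⟩ := hext B hB
    -- the elements of B' \ B are orthogonal to the span of B
    have hperp : B' \ B ⊆ Perp s (SpanOf s B) := by
      rintro x ⟨hxB', hxB⟩ y hy
      have hsubset : insert x B ⊆ B' := Set.insert_subset hxB' hBB'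
      have hins : OrthoSet s (insert x B) := fun a ha b hb hab =>
        hB' a (hsubset ha) b (hsubset hb) hab
      have := span_orth_aux s hval hbound hins hxB hy
      rw [hsym]; exact this
    -- Oplus is a subspace
    have hsub : IsSubspace s (Oplus s (SpanOf s B) (Perp s (SpanOf s B))) := by
      apply hinter
      rintro X ⟨hX, -⟩
      exact hX
    obtain ⟨C, hC, hCeq⟩ := hsub
    -- B' is contained in Oplus, hence in SpanOf C
    have hB'sub : B' ⊆ SpanOf s C := by
      rw [← hCeq]
      intro x hx
      intro X hX
      rcases hX with ⟨-, hUX⟩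
      by_cases hxB : x ∈ B
      · exact hUX (Or.inl (hBspan hxB))
      · exact hUX (Or.inr (hperp ⟨hx, hxB⟩))
    -- extend C; any new element is orthogonal to everything in SpanOf C,
    -- in particular to all of B', contradicting SpanOf B' = univ
    obtain ⟨C', hCC', hC', hC'univ⟩ := hext C hC
    have hCC'eq : C' = C := by
      by_contra h
      have : ∃ c, c ∈ C' ∧ c ∉ C := by
        by_contra h2
        push_neg at h2
        exact h (Set.Subset.antisymm h2 hCC')
      obtain ⟨c, hcC', hcC⟩ := this
      have hsubsetC : insert c C ⊆ C' := Set.insert_subset hcC' hCC'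
      have hinsC : OrthoSet s (insert c C) := fun a ha b hb hab =>
        hC' a (hsubsetC ha) b (hsubsetC hb) hab
      -- c is orthogonal to every element of B'
      have hco : ∀ b ∈ B', s c b = 0 := by
        intro b hb
        rw [hsym]
        exact span_orth_aux s hval hbound hinsC hcC (hB'sub hb)
      -- but c ∈ univ = SpanOf B'
      have hc1 : (∑' z : B', s c (z : Ω)) = 1 := by
        have : c ∈ SpanOf s B' := hB'univ ▸ Set.mem_univ c
        exact this
      have : (∑' z : B', s c (z : Ω)) = 0 := by
        have : ∀ z : B', s c (z : Ω) = 0 := fun z => hco z z.2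
        simp [this]
      rw [this] at hc1
      norm_num at hc1
    -- so SpanOf C = SpanOf C' = univ
    rw [hCC'eq] at hC'univ
    rw [hCeq]
    exact hC'univ
  · -- intersection is empty
    ext x
    simp only [Set.mem_inter_iff, Set.mem_empty_iff_false, iff_false, not_and]
    intro hx hxp
    have h1 : s x x = 0 := hxp x hx
    have h2 : s x x = 1 := (heq x x).2 rfl
    rw [h1] at h2
    norm_num at h2
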